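/- Suppose the profile curve γ ⊂ ℝ⁴ has curvatures satisfying κ₃(s) = c₁κ₂(s)/(c₂ + κ₁(s)) for constants c₁, c₂ (with c₂ + κ₁(s) ≠ 0), and let r(t) = 1/(c₁ sin t - c₂ cos t). Then with A(t) = r(t)cos t and B(t) = r(t)sin t, both flatness conditions hold: 2(r')² - r r'' + r² = 0 and κ₁κ₃r² + (r'κ₂ - rκ₃)cos t - (r'κ₃ + rκ₂)sin t = 0; hence the surface pencil X(s,t) = γ(s) + A(t)V₂(s) + B(t)V₄(s) is flat. -/

import Mathlib

open Real


private lemma alg2_aux (c₁ c₂ k1 k2 g g' u v : ℝ) (hg : g ≠ 0) (hk : c₂ + k1 ≠ 0)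
    (S1 : g' * v + g * u = c₁) (S2 : g' * u - g * v = c₂) :
    k1 * (c₁ * k2 / (c₂ + k1)) * (g⁻¹) ^ 2 +
      (-g' / g ^ 2 * k2 - g⁻¹ * (c₁ * k2 / (c₂ + k1))) * v -
      (-g' / g ^ 2 * (c₁ * k2 / (c₂ + k1)) + g⁻¹ * k2) * u = 0 := by
  have h : k1 * (c₁ * k2 / (c₂ + k1)) * (g⁻¹) ^ 2 +
      (-g' / g ^ 2 * k2 - g⁻¹ * (c₁ * k2 / (c₂ + k1))) * v -
      (-g' / g ^ 2 * (c₁ * k2 / (c₂ + k1)) + g⁻¹ * k2) * u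
      = (k2 * (c₁ * k1 - (c₂ + k1) * (g' * v + g * u) + c₁ * (g' * u - g * v))) /
          ((c₂ + k1) * g ^ 2) := by
    field_simp
    ring
  rw [h, S1, S2]
  have h0 : k2 * (c₁ * k1 - (c₂ + k1) * c₁ + c₁ * c₂) = 0 := by ring
  rw [h0, zero_div]

private lemma alg3_aux (c₁ c₂ k1 k2 g u v : ℝ) (hg : g ≠ 0) (hk : c₂ + k1 ≠ 0)
    (hgdef : c₁ * u - c₂ * v = g) :
    (1 - k1 * (v * g⁻¹)) * (k2 * (-c₁ * (g ^ 2)⁻¹) - c₁ * k2 / (c₂ + k1) * (-c₂ * (g ^ 2)⁻¹)) -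
      (k2 * (v * g⁻¹) - c₁ * k2 / (c₂ + k1) * (u * g⁻¹)) * (-(k1 * (-c₁ * (g ^ 2)⁻¹))) = 0 := by
  have h : (1 - k1 * (v * g⁻¹)) * (k2 * (-c₁ * (g ^ 2)⁻¹) - c₁ * k2 / (c₂ + k1) * (-c₂ * (g ^ 2)⁻¹)) -
      (k2 * (v * g⁻¹) - c₁ * k2 / (c₂ + k1) * (u * g⁻¹)) * (-(k1 * (-c₁ * (g ^ 2)⁻¹)))
      = ((-(c₁ * k2) * (c₂ + k1) + c₂ * (c₁ * k2)) * g + k1 * (c₁ * k2) * (c₁ * u - c₂ * v)) /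
          ((c₂ + k1) * g ^ 3) := by
    field_simp
    ring
  rw [h, hgdef]
  have h0 : (-(c₁ * k2) * (c₂ + k1) + c₂ * (c₁ * k2)) * g + k1 * (c₁ * k2) * g = 0 := by ring
  rw [h0, zero_div]

/-- If `κ₃ = c₁κ₂/(c₂ + κ₁)` and `r(t) = 1/(c₁ sin t - c₂ cos t)`, then
with `A = r cos`, `B = r sin` both flatness conditions hold, hence the surface pencil
is flat (its Gaussian curvature vanishes). -/
theorem flat_pencil_case_ii
    (κ₁ κ₂ κ₃ : ℝ → ℝ) (c₁ c₂ : ℝ)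
    (hκ : ∀ s, c₂ + κ₁ s ≠ 0)
    (hκ₃ : ∀ s, κ₃ s = c₁ * κ₂ s / (c₂ + κ₁ s))
    (r : ℝ → ℝ) (hr : ∀ t, r t = (c₁ * sin t - c₂ * cos t)⁻¹)
    (A B : ℝ → ℝ)
    (hA : ∀ t, A t = r t * cos t) (hB : ∀ t, B t = r t * sin t)
    (a b : ℝ → ℝ → ℝ)
    (ha : ∀ s t, a s t = 1 - κ₁ s * A t)
    (hb : ∀ s t, b s t = κ₂ s * A t - κ₃ s * B t)
    (K : ℝ → ℝ → ℝ)
    (hK : ∀ s t, K s t =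
      ((a s t ^ 2 + b s t ^ 2) * (deriv A t * deriv (deriv B) t - deriv B t * deriv (deriv A) t) *
          (deriv A t * b s t * κ₃ s - deriv B t * (κ₁ s * a s t - κ₂ s * b s t)) -
        ((deriv A t) ^ 2 + (deriv B t) ^ 2) *
          (a s t * deriv (fun τ => b s τ) t - b s t * deriv (fun τ => a s τ) t) ^ 2) /
        ((a s t ^ 2 + b s t ^ 2) * ((deriv A t) ^ 2 + (deriv B t) ^ 2)) ^ 2) :
    ∀ s t, c₁ * sin t - c₂ * cos t ≠ 0 →
      2 * (deriv r t) ^ 2 - r t * deriv (deriv r) t + (r t) ^ 2 = 0 ∧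
      κ₁ s * κ₃ s * (r t) ^ 2 + (deriv r t * κ₂ s - r t * κ₃ s) * cos t -
        (deriv r t * κ₃ s + r t * κ₂ s) * sin t = 0 ∧
      K s t = 0 := by
  intro s t ht
  set G : ℝ → ℝ := fun x => c₁ * sin x - c₂ * cos x with hG
  have hGd : ∀ x : ℝ, HasDerivAt G (c₁ * cos x + c₂ * sin x) x := by
    intro x
    have := ((hasDerivAt_sin x).const_mul c₁).sub ((hasDerivAt_cos x).const_mul c₂)
    refine this.congr_deriv ?_
    ring
  have htG : G t ≠ 0 := ht
  have hGc : Continuous G := by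
    fun_prop
  have hne : ∀ᶠ x in nhds t, G x ≠ 0 := (hGc.continuousAt).eventually_ne htG
  have hrG : r = fun x => (G x)⁻¹ := funext hr
  have hAG : A = fun x => cos x * (G x)⁻¹ := by
    funext x; rw [hA, hr]; ring
  have hBG : B = fun x => sin x * (G x)⁻¹ := by
    funext x; rw [hB, hr]; ring
  have hs2 : sin t ^ 2 + cos t ^ 2 = 1 := sin_sq_add_cos_sq t
  -- first derivative of r
  have hRd : ∀ x : ℝ, G x ≠ 0 →
      HasDerivAt r (-(c₁ * cos x + c₂ * sin x) / (G x) ^ 2) x := by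
    intro x hx
    rw [hrG]
    exact (hGd x).inv hx
  -- first derivatives of A and B
  have hAd : ∀ x : ℝ, G x ≠ 0 → HasDerivAt A (-c₁ * ((G x) ^ 2)⁻¹) x := by
    intro x hx
    rw [hAG]
    have hsx : sin x ^ 2 + cos x ^ 2 = 1 := sin_sq_add_cos_sq x
    have key : sin x * (c₁ * sin x - c₂ * cos x) + cos x * (c₁ * cos x + c₂ * sin x) = c₁ := by
      linear_combination c₁ * hsx
    have h2 : -sin x * ((c₁ * sin x - c₂ * cos x))⁻¹ +
        cos x * (-(c₁ * cos x + c₂ * sin x) / (c₁ * sin x - c₂ * cos x) ^ 2)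
        = -(sin x * (c₁ * sin x - c₂ * cos x) + cos x * (c₁ * cos x + c₂ * sin x)) /
            (c₁ * sin x - c₂ * cos x) ^ 2 := by
      field_simp
      ring
    have := (hasDerivAt_cos x).mul ((hGd x).inv hx)
    refine this.congr_deriv (Eq.symm ?_)
    show -c₁ * (((c₁ * sin x - c₂ * cos x)) ^ 2)⁻¹ = -sin x * ((c₁ * sin x - c₂ * cos x))⁻¹ +
        cos x * (-(c₁ * cos x + c₂ * sin x) / (c₁ * sin x - c₂ * cos x) ^ 2)
    rw [h2, key]
    ring
  have hBd : ∀ x : ℝ, G x ≠ 0 → HasDerivAt B (-c₂ * ((G x) ^ 2)⁻¹) x := by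
    intro x hx
    rw [hBG]
    have hsx : sin x ^ 2 + cos x ^ 2 = 1 := sin_sq_add_cos_sq x
    have key : cos x * (c₁ * sin x - c₂ * cos x) - sin x * (c₁ * cos x + c₂ * sin x) = -c₂ := by
      linear_combination (-c₂) * hsx
    have h2 : cos x * ((c₁ * sin x - c₂ * cos x))⁻¹ +
        sin x * (-(c₁ * cos x + c₂ * sin x) / (c₁ * sin x - c₂ * cos x) ^ 2)
        = (cos x * (c₁ * sin x - c₂ * cos x) - sin x * (c₁ * cos x + c₂ * sin x)) /
            (c₁ * sin x - c₂ * cos x) ^ 2 := by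
      field_simp
      ring
    have := (hasDerivAt_sin x).mul ((hGd x).inv hx)
    refine this.congr_deriv (Eq.symm ?_)
    show -c₂ * (((c₁ * sin x - c₂ * cos x)) ^ 2)⁻¹ = cos x * ((c₁ * sin x - c₂ * cos x))⁻¹ +
        sin x * (-(c₁ * cos x + c₂ * sin x) / (c₁ * sin x - c₂ * cos x) ^ 2)
    rw [h2, key]
    ring
  -- second derivative helper : derivative of fun x => C * ((G x)^2)⁻¹
  have hsqd : ∀ (C : ℝ) (x : ℝ), G x ≠ 0 →
      HasDerivAt (fun y => C * ((G y) ^ 2)⁻¹)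
        (C * (-(2 * G x * (c₁ * cos x + c₂ * sin x)) / ((G x) ^ 2) ^ 2)) x := by
    intro C x hx
    have h1 : HasDerivAt (fun y => (G y) ^ 2) (2 * G x ^ 1 * (c₁ * cos x + c₂ * sin x)) x :=
      (hGd x).pow 2
    have h2 := (h1.inv (pow_ne_zero 2 hx)).const_mul C
    refine h2.congr_deriv ?_
    ring
  -- values at t
  have hrt : r t = (G t)⁻¹ := hr t
  have hrt' : deriv r t = -(c₁ * cos t + c₂ * sin t) / (G t) ^ 2 := (hRd t htG).deriv
  have hrev : deriv r =ᶠ[nhds t] fun x => -(c₁ * cos x + c₂ * sin x) * ((G x) ^ 2)⁻¹ := by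
    filter_upwards [hne] with x hx
    rw [(hRd x hx).deriv]; ring
  have hrt'' : deriv (deriv r) t =
      2 * (c₁ * cos t + c₂ * sin t) ^ 2 / (G t) ^ 3 + (G t)⁻¹ := by
    rw [hrev.deriv_eq]
    have h1 : HasDerivAt (fun x => -(c₁ * cos x + c₂ * sin x) * ((G x) ^ 2)⁻¹)
        ((-(c₁ * -sin t + c₂ * cos t)) * ((G t) ^ 2)⁻¹ +
          (-(c₁ * cos t + c₂ * sin t)) * (-(2 * G t ^ 1 * (c₁ * cos t + c₂ * sin t)) / ((G t) ^ 2) ^ 2)) t := by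
      have hnum : HasDerivAt (fun x => -(c₁ * cos x + c₂ * sin x)) (-(c₁ * -sin t + c₂ * cos t)) t := by
        exact (((hasDerivAt_cos t).const_mul c₁).add ((hasDerivAt_sin t).const_mul c₂)).neg
      exact hnum.mul (((hGd t).pow 2).inv (pow_ne_zero 2 htG))
    rw [h1.deriv]
    have : c₁ * -sin t + c₂ * cos t = -(G t) := by simp [hG]; ring
    rw [this]
    field_simp
    ring
  have hAt' : deriv A t = -c₁ * ((G t) ^ 2)⁻¹ := (hAd t htG).deriv
  have hBt' : deriv B t = -c₂ * ((G t) ^ 2)⁻¹ := (hBd t htG).deriv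
  have hAev : deriv A =ᶠ[nhds t] fun x => -c₁ * ((G x) ^ 2)⁻¹ := by
    filter_upwards [hne] with x hx
    exact (hAd x hx).deriv
  have hBev : deriv B =ᶠ[nhds t] fun x => -c₂ * ((G x) ^ 2)⁻¹ := by
    filter_upwards [hne] with x hx
    exact (hBd x hx).deriv
  have hAt'' : deriv (deriv A) t =
      -c₁ * (-(2 * G t * (c₁ * cos t + c₂ * sin t)) / ((G t) ^ 2) ^ 2) := by
    rw [hAev.deriv_eq]; exact (hsqd (-c₁) t htG).deriv
  have hBt'' : deriv (deriv B) t =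
      -c₂ * (-(2 * G t * (c₁ * cos t + c₂ * sin t)) / ((G t) ^ 2) ^ 2) := by
    rw [hBev.deriv_eq]; exact (hsqd (-c₂) t htG).deriv
  -- derivatives of a and b in t
  have hat : deriv (fun τ => a s τ) t = -(κ₁ s * (-c₁ * ((G t) ^ 2)⁻¹)) := by
    have hfa : (fun τ => a s τ) = fun τ => 1 - κ₁ s * A τ := funext (ha s)
    rw [hfa]
    exact (((hAd t htG).const_mul (κ₁ s)).const_sub 1).deriv
  have hbt : deriv (fun τ => b s τ) t =
      κ₂ s * (-c₁ * ((G t) ^ 2)⁻¹) - κ₃ s * (-c₂ * ((G t) ^ 2)⁻¹) := by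
    have hfb : (fun τ => b s τ) = fun τ => κ₂ s * A τ - κ₃ s * B τ := funext (hb s)
    rw [hfb]
    exact (((hAd t htG).const_mul (κ₂ s)).sub ((hBd t htG).const_mul (κ₃ s))).deriv
  have hk3 := hκ₃ s
  have hks := hκ s
  refine ⟨?_, ?_, ?_⟩
  · rw [hrt, hrt', hrt'']
    field_simp
    ring
  · rw [hrt, hrt', hk3]
    have S1 : (c₁ * cos t + c₂ * sin t) * cos t + G t * sin t = c₁ := by
      simp only [hG]
      linear_combination c₁ * hs2
    have S2 : (c₁ * cos t + c₂ * sin t) * sin t - G t * cos t = c₂ := by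
      simp only [hG]
      linear_combination c₂ * hs2
    linear_combination alg2_aux c₁ c₂ (κ₁ s) (κ₂ s) (G t) (c₁ * cos t + c₂ * sin t)
      (sin t) (cos t) htG hks S1 S2
  · rw [hK]
    have hzero1 : deriv A t * deriv (deriv B) t - deriv B t * deriv (deriv A) t = 0 := by
      rw [hAt', hBt', hAt'', hBt'']; ring
    have hzero2 : a s t * deriv (fun τ => b s τ) t - b s t * deriv (fun τ => a s τ) t = 0 := by
      rw [hat, hbt, ha, hb, hAG, hBG, hk3]
      have hgdef : c₁ * sin t - c₂ * cos t = G t := rfl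
      linear_combination alg3_aux c₁ c₂ (κ₁ s) (κ₂ s) (G t) (sin t) (cos t) htG hks hgdef
    rw [hzero1, hzero2]
    simp
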